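/- (Alexander trick, bi-Lipschitz version.) Let φ be a homeomorphism of the closed unit disk D̄ = {z ∈ ℂ : |z| ≤ 1} onto itself that is L-bi-Lipschitz for some L ≥ 1 and satisfies φ(z) = z for all |z| = 1. Define φ̄ : D̄ × [0,1] → D̄ × [0,1] by φ̄(z,t) := (t·φ(z/t), t) if 0 ≤ |z| ≤ t (with φ̄(0,0) := (0,0)) and φ̄(z,t) := (z,t) if t ≤ |z| ≤ 1. Then φ̄ is a bijection of D̄ × [0,1] with φ̄ restricted to D̄ × {1} equal to φ and φ̄ equal to the identity on the rest of ∂(D̄ × [0,1]), and φ̄ is L'-bi-Lipschitz for some constant L' depending only on L. -/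

import Mathlib

noncomputable def Complex.abs : AbsoluteValue ℂ ℝ := NormedField.toAbsoluteValue ℂ

@[simp] lemma Complex.abs_apply' (z : ℂ) : Complex.abs z = ‖z‖ := rfl

lemma Complex.abs_ofReal (r : ℝ) : Complex.abs (r : ℂ) = |r| := Complex.norm_real r

namespace AlexanderAux

open Set Metric

noncomputable def g (φ : ℂ → ℂ) (t : ℝ) (z : ℂ) : ℂ :=
  if Complex.abs z ≤ t then (t : ℂ) * φ (z / (t : ℂ)) else z

lemma mem_iff {z : ℂ} : z ∈ Metric.closedBall (0:ℂ) 1 ↔ Complex.abs z ≤ 1 := by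
  rw [Metric.mem_closedBall, Complex.dist_eq, sub_zero]
  exact Iff.rfl

lemma exists_boundary (u : ℂ) (hu : Complex.abs u ≤ 1) :
    ∃ v : ℂ, Complex.abs v = 1 ∧ Complex.abs (u - v) = 1 - Complex.abs u := by
  by_cases h : u = 0
  · exact ⟨1, by simp [h]⟩
  · have ha : (0:ℝ) < Complex.abs u := AbsoluteValue.pos _ h
    refine ⟨u / (Complex.abs u : ℂ), ?_, ?_⟩
    · rw [map_div₀, Complex.abs_ofReal, abs_of_pos ha, div_self (ne_of_gt ha)]
    · have e : u - u / (Complex.abs u : ℂ)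
          = u * (((Complex.abs u - 1 : ℝ) : ℂ) / ((Complex.abs u : ℝ) : ℂ)) := by
        have hne : ((Complex.abs u : ℝ) : ℂ) ≠ 0 := by
          simpa using ne_of_gt ha
        field_simp
        push_cast
        ring
      rw [e, map_mul, map_div₀, Complex.abs_ofReal, Complex.abs_ofReal,
        abs_of_pos ha, abs_of_nonpos (by linarith)]
      field_simp
      ring

variable {L : ℝ} {φ : ℂ → ℂ}

lemma lipAbs (hL : 1 ≤ L)
    (hlip : ∀ z ∈ Metric.closedBall (0:ℂ) 1, ∀ w ∈ Metric.closedBall (0:ℂ) 1,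
      dist z w / L ≤ dist (φ z) (φ w) ∧ dist (φ z) (φ w) ≤ L * dist z w)
    {z w : ℂ} (hz : Complex.abs z ≤ 1) (hw : Complex.abs w ≤ 1) :
    Complex.abs (z - w) ≤ L * Complex.abs (φ z - φ w) ∧
      Complex.abs (φ z - φ w) ≤ L * Complex.abs (z - w) := by
  have h := hlip z (mem_iff.2 hz) w (mem_iff.2 hw)
  rw [Complex.dist_eq, Complex.dist_eq] at h
  have hL0 : (0:ℝ) < L := by linarith
  refine ⟨?_, h.2⟩
  have := (div_le_iff₀ hL0).mp h.1
  change ‖z - w‖ ≤ L * ‖φ z - φ w‖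
  linarith [this]

lemma near_id (hL : 1 ≤ L)
    (hlip : ∀ z ∈ Metric.closedBall (0:ℂ) 1, ∀ w ∈ Metric.closedBall (0:ℂ) 1,
      dist z w / L ≤ dist (φ z) (φ w) ∧ dist (φ z) (φ w) ≤ L * dist z w)
    (hbd : ∀ z, Complex.abs z = 1 → φ z = z)
    {u : ℂ} (hu : Complex.abs u ≤ 1) :
    Complex.abs (φ u - u) ≤ (L + 1) * (1 - Complex.abs u) := by
  obtain ⟨v, hv1, hvd⟩ := exists_boundary u hu
  have h1 : Complex.abs (φ u - φ v) ≤ L * Complex.abs (u - v) :=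
    (lipAbs hL hlip hu (le_of_eq hv1)).2
  have htri : Complex.abs (φ u - u) ≤ Complex.abs (φ u - φ v) + Complex.abs (φ v - u) :=
    AbsoluteValue.sub_le _ _ _ _
  rw [hbd v hv1] at htri h1
  have h2 : Complex.abs (v - u) = Complex.abs (u - v) := AbsoluteValue.map_sub _ _ _
  nlinarith [htri, h1, hvd, h2]

lemma radial_lower (hL : 1 ≤ L)
    (hlip : ∀ z ∈ Metric.closedBall (0:ℂ) 1, ∀ w ∈ Metric.closedBall (0:ℂ) 1,
      dist z w / L ≤ dist (φ z) (φ w) ∧ dist (φ z) (φ w) ≤ L * dist z w)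
    (hbd : ∀ z, Complex.abs z = 1 → φ z = z)
    (hmaps : ∀ z ∈ Metric.closedBall (0:ℂ) 1, φ z ∈ Metric.closedBall (0:ℂ) 1)
    {u : ℂ} (hu : Complex.abs u ≤ 1) :
    1 - Complex.abs u ≤ L * (1 - Complex.abs (φ u)) := by
  have hφu : Complex.abs (φ u) ≤ 1 := mem_iff.1 (hmaps u (mem_iff.2 hu))
  obtain ⟨v, hv1, hvd⟩ := exists_boundary (φ u) hφu
  have h1 : Complex.abs (u - v) ≤ L * Complex.abs (φ u - φ v) :=
    (lipAbs hL hlip hu (le_of_eq hv1)).1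
  rw [hbd v hv1] at h1
  have h2 : Complex.abs v ≤ Complex.abs (v - u) + Complex.abs u := by
    simpa using Complex.abs.add_le (v - u) u
  have h3 : Complex.abs (v - u) = Complex.abs (u - v) := AbsoluteValue.map_sub _ _ _
  nlinarith [h1, h2, hvd, h3, hv1]

lemma cone_est (hL : 1 ≤ L)
    (hlip : ∀ z ∈ Metric.closedBall (0:ℂ) 1, ∀ w ∈ Metric.closedBall (0:ℂ) 1,
      dist z w / L ≤ dist (φ z) (φ w) ∧ dist (φ z) (φ w) ≤ L * dist z w)
    (hbd : ∀ z, Complex.abs z = 1 → φ z = z)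
    {z : ℂ} {t : ℝ} (hzt : Complex.abs z ≤ t) (ht : t ≤ 1) :
    Complex.abs ((t:ℂ) * φ (z / (t:ℂ)) - z) ≤ (L + 1) * (t - Complex.abs z) := by
  have ht0 : 0 ≤ t := le_trans (AbsoluteValue.nonneg _ z) hzt
  rcases eq_or_lt_of_le ht0 with h0 | h0
  · have hz0 : z = 0 := by
      have : Complex.abs z = 0 := le_antisymm (h0 ▸ hzt) (AbsoluteValue.nonneg _ z)
      simpa using this
    simp [hz0, ← h0]
  · have hne : ((t:ℝ):ℂ) ≠ 0 := by
      simpa using ne_of_gt h0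
    have hu : Complex.abs (z / (t:ℂ)) ≤ 1 := by
      rw [map_div₀, Complex.abs_ofReal, abs_of_pos h0, div_le_one h0]
      exact le_trans hzt (le_refl t)
    have key : (t:ℂ) * φ (z / (t:ℂ)) - z = (t:ℂ) * (φ (z / (t:ℂ)) - z / (t:ℂ)) := by
      field_simp
    have habs : Complex.abs (z / (t:ℂ)) = Complex.abs z / t := by
      rw [map_div₀, Complex.abs_ofReal, abs_of_pos h0]
    have hfix := near_id hL hlip hbd hu
    rw [key, map_mul, Complex.abs_ofReal, abs_of_pos h0]
    rw [habs] at hfix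
    have := mul_le_mul_of_nonneg_left hfix ht0
    have hc : t * ((L + 1) * (1 - Complex.abs z / t)) = (L + 1) * (t - Complex.abs z) := by
      field_simp
    rw [hc] at this
    exact this

lemma g_mem (hmaps : ∀ z ∈ Metric.closedBall (0:ℂ) 1, φ z ∈ Metric.closedBall (0:ℂ) 1)
    {t : ℝ} {z : ℂ} (ht : t ∈ Set.Icc (0:ℝ) 1) (hz : Complex.abs z ≤ 1) :
    Complex.abs (g φ t z) ≤ 1 := by
  unfold g
  split_ifs with h
  · rcases eq_or_lt_of_le ht.1 with h0 | h0
    · simp [← h0]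
    · have hu : Complex.abs (z / (t:ℂ)) ≤ 1 := by
        rw [map_div₀, Complex.abs_ofReal, abs_of_pos h0, div_le_one h0]
        exact h
      have := mem_iff.1 (hmaps _ (mem_iff.2 hu))
      rw [map_mul, Complex.abs_ofReal, abs_of_pos h0]
      nlinarith [this, ht.2, h0]
  · exact hz

lemma g_id (hbd : ∀ z, Complex.abs z = 1 → φ z = z)
    {t : ℝ} {z : ℂ} (ht : 0 ≤ t) (h : t ≤ Complex.abs z) : g φ t z = z := by
  unfold g
  split_ifs with hc
  · have he : Complex.abs z = t := le_antisymm hc h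
    rcases eq_or_lt_of_le ht with h0 | h0
    · have hz0 : z = 0 := by
        have : Complex.abs z = 0 := by rw [he, ← h0]
        simpa using this
      simp [hz0, ← h0]
    · have hne : ((t:ℝ):ℂ) ≠ 0 := by simpa using ne_of_gt h0
      have h1 : Complex.abs (z / (t:ℂ)) = 1 := by
        rw [map_div₀, Complex.abs_ofReal, abs_of_pos h0, he, div_self (ne_of_gt h0)]
      rw [hbd _ h1]
      field_simp
  · rfl

lemma in_in (hL : 1 ≤ L)
    (hlip : ∀ z ∈ Metric.closedBall (0:ℂ) 1, ∀ w ∈ Metric.closedBall (0:ℂ) 1,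
      dist z w / L ≤ dist (φ z) (φ w) ∧ dist (φ z) (φ w) ≤ L * dist z w)
    {t : ℝ} {z w : ℂ} (ht0 : 0 < t) (ht1 : t ≤ 1)
    (hz : Complex.abs z ≤ t) (hw : Complex.abs w ≤ t) :
    Complex.abs (z - w) ≤ L * Complex.abs (g φ t z - g φ t w) ∧
      Complex.abs (g φ t z - g φ t w) ≤ L * Complex.abs (z - w) := by
  have hne : ((t:ℝ):ℂ) ≠ 0 := by simpa using ne_of_gt ht0
  have huz : Complex.abs (z / (t:ℂ)) ≤ 1 := by
    rw [map_div₀, Complex.abs_ofReal, abs_of_pos ht0, div_le_one ht0]; exact hz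
  have huw : Complex.abs (w / (t:ℂ)) ≤ 1 := by
    rw [map_div₀, Complex.abs_ofReal, abs_of_pos ht0, div_le_one ht0]; exact hw
  have lip := lipAbs hL hlip huz huw
  have e : g φ t z - g φ t w = (t:ℂ) * (φ (z / (t:ℂ)) - φ (w / (t:ℂ))) := by
    unfold g; rw [if_pos hz, if_pos hw]; ring
  have e2 : Complex.abs (z / (t:ℂ) - w / (t:ℂ)) = Complex.abs (z - w) / t := by
    rw [div_sub_div_same, map_div₀, Complex.abs_ofReal, abs_of_pos ht0]
  rw [e2] at lip
  rw [e, map_mul, Complex.abs_ofReal, abs_of_pos ht0]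
  have hcanc : t * (Complex.abs (z - w) / t) = Complex.abs (z - w) := by
    field_simp
  constructor
  · have := mul_le_mul_of_nonneg_left lip.1 ht0.le
    rw [hcanc] at this
    nlinarith [this]
  · have := mul_le_mul_of_nonneg_left lip.2 ht0.le
    have hc2 : t * (L * (Complex.abs (z - w) / t)) = L * Complex.abs (z - w) := by
      field_simp
    rw [hc2] at this
    exact this


lemma cross_upper (hL : 1 ≤ L)
    (hlip : ∀ z ∈ Metric.closedBall (0:ℂ) 1, ∀ w ∈ Metric.closedBall (0:ℂ) 1,
      dist z w / L ≤ dist (φ z) (φ w) ∧ dist (φ z) (φ w) ≤ L * dist z w)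
    (hbd : ∀ z, Complex.abs z = 1 → φ z = z)
    {t : ℝ} {z w : ℂ} (hzt : Complex.abs z ≤ t) (htw : t ≤ Complex.abs w) (ht1 : t ≤ 1) :
    Complex.abs (g φ t z - g φ t w) ≤ (L + 2) * Complex.abs (z - w) := by
  have ht0 : 0 ≤ t := le_trans (AbsoluteValue.nonneg _ z) hzt
  have hgw : g φ t w = w := g_id hbd ht0 htw
  have hgz : g φ t z = (t:ℂ) * φ (z / (t:ℂ)) := if_pos hzt
  have h1 := cone_est hL hlip hbd hzt ht1
  have htri : Complex.abs (g φ t z - w) ≤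
      Complex.abs ((t:ℂ) * φ (z / (t:ℂ)) - z) + Complex.abs (z - w) := by
    rw [hgz]; exact AbsoluteValue.sub_le _ _ _ _
  have h2 : Complex.abs w - Complex.abs z ≤ Complex.abs (z - w) := by
    have := Complex.abs.add_le (z - w) w
    simp only [sub_add_cancel] at this
    have h3 : Complex.abs (z - w) = Complex.abs (w - z) := AbsoluteValue.map_sub _ _ _
    have := Complex.abs.add_le (w - z) z
    simp only [sub_add_cancel] at this
    linarith [h3, this]
  rw [hgw]
  nlinarith [htri, h1, h2, AbsoluteValue.nonneg Complex.abs (z - w), hzt, htw]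

lemma cross_lower (hL : 1 ≤ L)
    (hlip : ∀ z ∈ Metric.closedBall (0:ℂ) 1, ∀ w ∈ Metric.closedBall (0:ℂ) 1,
      dist z w / L ≤ dist (φ z) (φ w) ∧ dist (φ z) (φ w) ≤ L * dist z w)
    (hbd : ∀ z, Complex.abs z = 1 → φ z = z)
    (hmaps : ∀ z ∈ Metric.closedBall (0:ℂ) 1, φ z ∈ Metric.closedBall (0:ℂ) 1)
    {t : ℝ} {z w : ℂ} (hzt : Complex.abs z ≤ t) (htw : t ≤ Complex.abs w) (ht1 : t ≤ 1) :
    Complex.abs (z - w) ≤ (L^2 + L + 1) * Complex.abs (g φ t z - g φ t w) := by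
  have ht0 : 0 ≤ t := le_trans (AbsoluteValue.nonneg _ z) hzt
  have hgw : g φ t w = w := g_id hbd ht0 htw
  rcases eq_or_lt_of_le ht0 with h0 | h0
  · -- t = 0, so z = 0, g t z = 0
    have hz0 : z = 0 := by
      have : Complex.abs z = 0 := le_antisymm (h0 ▸ hzt) (AbsoluteValue.nonneg _ z)
      simpa using this
    have hgz : g φ t z = 0 := by
      unfold g; rw [if_pos hzt, hz0, ← h0]; simp
    rw [hgz, hgw, hz0]
    have h1 : Complex.abs (0 - w) = Complex.abs w := by simp
    nlinarith [AbsoluteValue.nonneg Complex.abs w, h1]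
  · have hne : ((t:ℝ):ℂ) ≠ 0 := by simpa using ne_of_gt h0
    have hgz : g φ t z = (t:ℂ) * φ (z / (t:ℂ)) := if_pos hzt
    have hu : Complex.abs (z / (t:ℂ)) ≤ 1 := by
      rw [map_div₀, Complex.abs_ofReal, abs_of_pos h0, div_le_one h0]; exact hzt
    -- |z - gz| ≤ (L+1)(t - |z|)
    have h1 : Complex.abs (z - g φ t z) ≤ (L + 1) * (t - Complex.abs z) := by
      rw [hgz, ← AbsoluteValue.map_sub]
      exact cone_est hL hlip hbd hzt ht1
    -- t - |z| ≤ L (t - |gz|)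
    have habsgz : Complex.abs (g φ t z) = t * Complex.abs (φ (z / (t:ℂ))) := by
      rw [hgz, map_mul, Complex.abs_ofReal, abs_of_pos h0]
    have h2 : t - Complex.abs z ≤ L * (t - Complex.abs (g φ t z)) := by
      have hr := radial_lower hL hlip hbd hmaps hu
      have habsu : Complex.abs (z / (t:ℂ)) = Complex.abs z / t := by
        rw [map_div₀, Complex.abs_ofReal, abs_of_pos h0]
      rw [habsu] at hr
      have := mul_le_mul_of_nonneg_left hr ht0
      have hc : t * (1 - Complex.abs z / t) = t - Complex.abs z := by field_simp
      rw [hc] at this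
      rw [habsgz]
      nlinarith [this]
    -- t - |gz| ≤ |gz - gw|
    have h3 : t - Complex.abs (g φ t z) ≤ Complex.abs (g φ t z - g φ t w) := by
      rw [hgw]
      have := Complex.abs.add_le (w - g φ t z) (g φ t z)
      simp only [sub_add_cancel] at this
      have hc : Complex.abs (w - g φ t z) = Complex.abs (g φ t z - w) :=
        AbsoluteValue.map_sub _ _ _
      linarith [htw, hc ▸ this]
    have htri : Complex.abs (z - w) ≤
        Complex.abs (z - g φ t z) + Complex.abs (g φ t z - w) := AbsoluteValue.sub_le _ _ _ _
    rw [hgw] at h3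
    have h4 : t - Complex.abs z ≤ L * Complex.abs (g φ t z - w) := by
      calc t - Complex.abs z ≤ L * (t - Complex.abs (g φ t z)) := h2
        _ ≤ L * Complex.abs (g φ t z - w) :=
          mul_le_mul_of_nonneg_left h3 (by linarith : (0:ℝ) ≤ L)
    have h5 : (L + 1) * (t - Complex.abs z) ≤ (L + 1) * (L * Complex.abs (g φ t z - w)) :=
      mul_le_mul_of_nonneg_left h4 (by linarith : (0:ℝ) ≤ L + 1)
    rw [hgw]
    nlinarith [htri, h1, h5]

lemma slice (hL : 1 ≤ L)
    (hlip : ∀ z ∈ Metric.closedBall (0:ℂ) 1, ∀ w ∈ Metric.closedBall (0:ℂ) 1,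
      dist z w / L ≤ dist (φ z) (φ w) ∧ dist (φ z) (φ w) ≤ L * dist z w)
    (hbd : ∀ z, Complex.abs z = 1 → φ z = z)
    (hmaps : ∀ z ∈ Metric.closedBall (0:ℂ) 1, φ z ∈ Metric.closedBall (0:ℂ) 1)
    {t : ℝ} {z w : ℂ} (ht : t ∈ Set.Icc (0:ℝ) 1)
    (hz : Complex.abs z ≤ 1) (hw : Complex.abs w ≤ 1) :
    Complex.abs (z - w) ≤ (L^2 + L + 1) * Complex.abs (g φ t z - g φ t w) ∧
      Complex.abs (g φ t z - g φ t w) ≤ (L + 2) * Complex.abs (z - w) := by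
  have hLpos : (0:ℝ) < L := by linarith
  rcases le_total (Complex.abs z) t with h1 | h1 <;> rcases le_total (Complex.abs w) t with h2 | h2
  · -- both in
    rcases eq_or_lt_of_le ht.1 with h0 | h0
    · have hz0 : z = 0 := by
        have : Complex.abs z = 0 := le_antisymm (h0 ▸ h1) (AbsoluteValue.nonneg _ z)
        simpa using this
      have hw0 : w = 0 := by
        have : Complex.abs w = 0 := le_antisymm (h0 ▸ h2) (AbsoluteValue.nonneg _ w)
        simpa using this
      subst hz0; subst hw0
      simp
    · have h := in_in hL hlip h0 ht.2 h1 h2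
      constructor
      · refine le_trans h.1 ?_
        nlinarith [AbsoluteValue.nonneg Complex.abs (g φ t z - g φ t w)]
      · refine le_trans h.2 ?_
        nlinarith [AbsoluteValue.nonneg Complex.abs (z - w)]
  · exact ⟨cross_lower hL hlip hbd hmaps h1 h2 ht.2, cross_upper hL hlip hbd h1 h2 ht.2⟩
  · have e1 : Complex.abs (z - w) = Complex.abs (w - z) := AbsoluteValue.map_sub _ _ _
    have e2 : Complex.abs (g φ t z - g φ t w) = Complex.abs (g φ t w - g φ t z) :=
      AbsoluteValue.map_sub _ _ _
    rw [e1, e2]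
    exact ⟨cross_lower hL hlip hbd hmaps h2 h1 ht.2, cross_upper hL hlip hbd h2 h1 ht.2⟩
  · rw [g_id hbd ht.1 h1, g_id hbd ht.1 h2]
    constructor <;> nlinarith [AbsoluteValue.nonneg Complex.abs (z - w)]

lemma time_var (hL : 1 ≤ L)
    (hlip : ∀ z ∈ Metric.closedBall (0:ℂ) 1, ∀ w ∈ Metric.closedBall (0:ℂ) 1,
      dist z w / L ≤ dist (φ z) (φ w) ∧ dist (φ z) (φ w) ≤ L * dist z w)
    (hbd : ∀ z, Complex.abs z = 1 → φ z = z)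
    (hmaps : ∀ z ∈ Metric.closedBall (0:ℂ) 1, φ z ∈ Metric.closedBall (0:ℂ) 1)
    {s t : ℝ} {z : ℂ} (hs : s ∈ Set.Icc (0:ℝ) 1) (ht : t ∈ Set.Icc (0:ℝ) 1)
    (hst : s ≤ t) (hz : Complex.abs z ≤ 1) :
    Complex.abs (g φ s z - g φ t z) ≤ (L + 1) * (t - s) := by
  rcases le_or_gt (Complex.abs z) t with h1 | h1
  · rcases le_or_gt (Complex.abs z) s with h2 | h2
    · -- |z| ≤ s ≤ t
      rcases eq_or_lt_of_le hs.1 with h0 | h0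
      · -- s = 0, z = 0
        have hz0 : z = 0 := by
          have : Complex.abs z = 0 := le_antisymm (h0 ▸ h2) (AbsoluteValue.nonneg _ z)
          simpa using this
        subst hz0
        have hgs : g φ s 0 = 0 := by
          unfold g; rw [if_pos h2, ← h0]; simp
        have hgt : g φ t 0 = (t:ℂ) * φ 0 := by
          unfold g; rw [if_pos h1]; simp
        have hφ0 : Complex.abs (φ 0) ≤ 1 := mem_iff.1 (hmaps 0 (by simp [mem_iff]))
        rw [hgs, hgt, zero_sub, map_neg_eq_map, map_mul, Complex.abs_ofReal,
          abs_of_nonneg ht.1]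
        nlinarith [ht.1, hφ0]
      · -- 0 < s ≤ t
        have ht0 : 0 < t := lt_of_lt_of_le h0 hst
        have hgs : g φ s z = (s:ℂ) * φ (z / (s:ℂ)) := if_pos h2
        have hgt : g φ t z = (t:ℂ) * φ (z / (t:ℂ)) := if_pos h1
        have hus : Complex.abs (z / (s:ℂ)) ≤ 1 := by
          rw [map_div₀, Complex.abs_ofReal, abs_of_pos h0, div_le_one h0]; exact h2
        have hut : Complex.abs (z / (t:ℂ)) ≤ 1 := by
          rw [map_div₀, Complex.abs_ofReal, abs_of_pos ht0, div_le_one ht0]; exact h1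
        have hA : Complex.abs (φ (z / (s:ℂ))) ≤ 1 := mem_iff.1 (hmaps _ (mem_iff.2 hus))
        have lip := (lipAbs hL hlip hus hut).2
        have hdiff : z / (s:ℂ) - z / (t:ℂ) = z * (((t - s : ℝ):ℂ) / (((s:ℝ):ℂ) * ((t:ℝ):ℂ))) := by
          have hsne : ((s:ℝ):ℂ) ≠ 0 := by simpa using ne_of_gt h0
          have htne : ((t:ℝ):ℂ) ≠ 0 := by simpa using ne_of_gt ht0
          field_simp
          push_cast
          ring
        have habsdiff : Complex.abs (z / (s:ℂ) - z / (t:ℂ))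
            = Complex.abs z * ((t - s) / (s * t)) := by
          rw [hdiff, map_mul, map_div₀, Complex.abs_ofReal, map_mul,
            Complex.abs_ofReal, Complex.abs_ofReal,
            abs_of_nonneg (by linarith : (0:ℝ) ≤ t - s), abs_of_pos h0, abs_of_pos ht0]
        rw [habsdiff] at lip
        have hsplit : g φ s z - g φ t z
            = (((s - t : ℝ):ℂ)) * φ (z / (s:ℂ)) + (t:ℂ) * (φ (z / (s:ℂ)) - φ (z / (t:ℂ))) := by
          rw [hgs, hgt]; push_cast; ring
        have htri : Complex.abs (g φ s z - g φ t z)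
            ≤ Complex.abs (((s - t : ℝ):ℂ)) * Complex.abs (φ (z / (s:ℂ)))
              + Complex.abs ((t:ℂ)) * Complex.abs (φ (z / (s:ℂ)) - φ (z / (t:ℂ))) := by
          rw [hsplit]
          refine le_trans (Complex.abs.add_le _ _) ?_
          rw [map_mul, map_mul]
        rw [Complex.abs_ofReal, abs_of_nonpos (by linarith), Complex.abs_ofReal,
          abs_of_pos ht0] at htri
        -- t * (L * (|z| (t-s)/(st))) ≤ L (t-s) since |z| ≤ s
        have hkey : t * (L * (Complex.abs z * ((t - s) / (s * t)))) ≤ L * (t - s) := by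
          have hq : Complex.abs z * ((t - s) / (s * t)) ≤ (t - s) / t := by
            rw [mul_div_assoc', div_le_div_iff₀ (by positivity) ht0]
            have hzz : Complex.abs z * (t - s) ≤ s * (t - s) :=
              mul_le_mul_of_nonneg_right h2 (by linarith)
            nlinarith [mul_le_mul_of_nonneg_right hzz ht0.le]
          have := mul_le_mul_of_nonneg_left hq (by nlinarith : (0:ℝ) ≤ t * L)
          have hc : t * L * ((t - s) / t) = L * (t - s) := by field_simp
          nlinarith [this, hc ▸ this]
        have hstep : t * Complex.abs (φ (z / (s:ℂ)) - φ (z / (t:ℂ)))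
            ≤ t * (L * (Complex.abs z * ((t - s) / (s * t)))) :=
          mul_le_mul_of_nonneg_left lip ht0.le
        nlinarith [htri, hstep, hkey, hA, hst]
    · -- s < |z| ≤ t
      have hgs : g φ s z = z := g_id hbd hs.1 h2.le
      have hgt : g φ t z = (t:ℂ) * φ (z / (t:ℂ)) := if_pos h1
      have h3 := cone_est hL hlip hbd h1 ht.2
      rw [hgs, hgt, ← AbsoluteValue.map_sub]
      nlinarith [h3, h2, hL]
  · -- t < |z| : both identity
    have hgs : g φ s z = z := g_id hbd hs.1 (le_trans hst h1.le)
    have hgt : g φ t z = z := g_id hbd ht.1 h1.le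
    rw [hgs, hgt, sub_self]
    simp only [map_zero]
    nlinarith [hst, hL]

lemma time_var' (hL : 1 ≤ L)
    (hlip : ∀ z ∈ Metric.closedBall (0:ℂ) 1, ∀ w ∈ Metric.closedBall (0:ℂ) 1,
      dist z w / L ≤ dist (φ z) (φ w) ∧ dist (φ z) (φ w) ≤ L * dist z w)
    (hbd : ∀ z, Complex.abs z = 1 → φ z = z)
    (hmaps : ∀ z ∈ Metric.closedBall (0:ℂ) 1, φ z ∈ Metric.closedBall (0:ℂ) 1)
    {s t : ℝ} {z : ℂ} (hs : s ∈ Set.Icc (0:ℝ) 1) (ht : t ∈ Set.Icc (0:ℝ) 1)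
    (hz : Complex.abs z ≤ 1) :
    Complex.abs (g φ s z - g φ t z) ≤ (L + 1) * |s - t| := by
  rcases le_total s t with h | h
  · have := time_var hL hlip hbd hmaps hs ht h hz
    rwa [abs_of_nonpos (by linarith), neg_sub]
  · have := time_var hL hlip hbd hmaps ht hs h hz
    rw [abs_of_nonneg (by linarith)]
    rwa [← AbsoluteValue.map_sub]

end AlexanderAux

open AlexanderAux

/-- The Alexander trick, bi-Lipschitz version. If `φ` is an `L`-bi-Lipschitz
homeomorphism of the closed unit disk fixing the boundary circle pointwise, then
the map `φ̄(z,t) = (t·φ(z/t), t)` for `|z| ≤ t`, `φ̄(z,t) = (z,t)` for `t ≤ |z| ≤ 1`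
(and `φ̄(0,0) = (0,0)`) is a bijection of `D̄ × [0,1]` restricting to `φ` on
`D̄ × {1}`, equal to the identity on the rest of the boundary, and is
`L'`-bi-Lipschitz (in the maximum metric) with `L'` depending only on `L`. -/
theorem alexander_trick_biLipschitz (L : ℝ) (hL : 1 ≤ L) :
    ∃ L' : ℝ, 1 ≤ L' ∧
      ∀ φ : ℂ → ℂ,
        Set.BijOn φ (Metric.closedBall 0 1) (Metric.closedBall 0 1) →
        (∀ z ∈ Metric.closedBall (0 : ℂ) 1, ∀ w ∈ Metric.closedBall (0 : ℂ) 1,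
          dist z w / L ≤ dist (φ z) (φ w) ∧ dist (φ z) (φ w) ≤ L * dist z w) →
        (∀ z : ℂ, ‖z‖ = 1 → φ z = z) →
        ∀ Φ : ℂ × ℝ → ℂ × ℝ,
          (∀ (z : ℂ), ∀ t ∈ Set.Icc (0 : ℝ) 1, ‖z‖ ≤ t →
            Φ (z, t) = ((t : ℂ) * φ (z / (t : ℂ)), t)) →
          (∀ z ∈ Metric.closedBall (0 : ℂ) 1, ∀ t ∈ Set.Icc (0 : ℝ) 1,
            t ≤ ‖z‖ → Φ (z, t) = (z, t)) →
          Set.BijOn Φ (Metric.closedBall (0 : ℂ) 1 ×ˢ Set.Icc (0 : ℝ) 1)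
            (Metric.closedBall (0 : ℂ) 1 ×ˢ Set.Icc (0 : ℝ) 1) ∧
          (∀ z ∈ Metric.closedBall (0 : ℂ) 1, Φ (z, 1) = (φ z, 1)) ∧
          (∀ z ∈ Metric.closedBall (0 : ℂ) 1, ∀ t ∈ Set.Icc (0 : ℝ) 1,
            t = 0 ∨ ‖z‖ = 1 → Φ (z, t) = (z, t)) ∧
          ∀ p ∈ Metric.closedBall (0 : ℂ) 1 ×ˢ Set.Icc (0 : ℝ) 1,
            ∀ q ∈ Metric.closedBall (0 : ℂ) 1 ×ˢ Set.Icc (0 : ℝ) 1,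
              dist p q / L' ≤ dist (Φ p) (Φ q) ∧ dist (Φ p) (Φ q) ≤ L' * dist p q := by
  refine ⟨(L^2 + L + 1) * (L + 2), by nlinarith, ?_⟩
  intro φ hbij hlip hbd Φ hΦ1 hΦ2
  have hK1 : (1:ℝ) ≤ (L^2 + L + 1) * (L + 2) := by nlinarith
  have hK0 : (0:ℝ) < (L^2 + L + 1) * (L + 2) := by nlinarith
  have hmaps : ∀ z ∈ Metric.closedBall (0:ℂ) 1, φ z ∈ Metric.closedBall (0:ℂ) 1 :=
    fun z hz => hbij.1 hz
  have hg : ∀ z ∈ Metric.closedBall (0:ℂ) 1, ∀ t ∈ Set.Icc (0:ℝ) 1,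
      Φ (z, t) = (g φ t z, t) := by
    intro z hz t ht
    rcases le_or_gt (Complex.abs z) t with h | h
    · rw [hΦ1 z t ht h]
      unfold g; rw [if_pos h]
    · rw [hΦ2 z hz t ht h.le]
      unfold g; rw [if_neg (not_le.2 h)]
  have hgp : ∀ p ∈ Metric.closedBall (0:ℂ) 1 ×ˢ Set.Icc (0:ℝ) 1,
      Φ p = (g φ p.2 p.1, p.2) := by
    intro p hp
    have := hg p.1 hp.1 p.2 hp.2
    simpa using this
  -- bijectivity
  have hMapsTo : Set.MapsTo Φ (Metric.closedBall (0:ℂ) 1 ×ˢ Set.Icc (0:ℝ) 1)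
      (Metric.closedBall (0:ℂ) 1 ×ˢ Set.Icc (0:ℝ) 1) := by
    intro p hp
    rw [hgp p hp]
    exact ⟨mem_iff.2 (g_mem hmaps hp.2 (mem_iff.1 hp.1)), hp.2⟩
  have hInj : Set.InjOn Φ (Metric.closedBall (0:ℂ) 1 ×ˢ Set.Icc (0:ℝ) 1) := by
    intro p hp q hq hpq
    rw [hgp p hp, hgp q hq] at hpq
    rw [Prod.mk.injEq] at hpq
    obtain ⟨h1, h2⟩ := hpq
    rw [← h2] at h1
    have hs := (slice hL hlip hbd hmaps hp.2 (mem_iff.1 hp.1) (mem_iff.1 hq.1)).1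
    rw [h1, sub_self] at hs
    simp only [map_zero, mul_zero] at hs
    have h0 : Complex.abs (p.1 - q.1) = 0 :=
      le_antisymm hs (AbsoluteValue.nonneg _ _)
    have h1' : p.1 = q.1 := by
      have := (AbsoluteValue.eq_zero Complex.abs).1 h0
      exact sub_eq_zero.1 this
    exact Prod.ext h1' h2
  have hSurj : Set.SurjOn Φ (Metric.closedBall (0:ℂ) 1 ×ˢ Set.Icc (0:ℝ) 1)
      (Metric.closedBall (0:ℂ) 1 ×ˢ Set.Icc (0:ℝ) 1) := by
    rintro ⟨w, t⟩ hq
    have hw : Complex.abs w ≤ 1 := mem_iff.1 hq.1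
    have ht : t ∈ Set.Icc (0:ℝ) 1 := hq.2
    rcases le_or_gt t (Complex.abs w) with h | h
    · refine ⟨(w, t), ⟨hq.1, ht⟩, ?_⟩
      rw [hg w hq.1 t ht, g_id hbd ht.1 h]
    · have ht0 : 0 < t := lt_of_le_of_lt (AbsoluteValue.nonneg _ w) h
      have hne : ((t:ℝ):ℂ) ≠ 0 := by simpa using ne_of_gt ht0
      have hu : w / (t:ℂ) ∈ Metric.closedBall (0:ℂ) 1 := by
        rw [mem_iff, map_div₀, Complex.abs_ofReal, abs_of_pos ht0, div_le_one ht0]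
        exact h.le
      obtain ⟨u, hu1, hu2⟩ := hbij.2.2 hu
      have hu1' : Complex.abs u ≤ 1 := mem_iff.1 hu1
      have habs : Complex.abs ((t:ℂ) * u) ≤ t := by
        rw [map_mul, Complex.abs_ofReal, abs_of_pos ht0]
        nlinarith [AbsoluteValue.nonneg Complex.abs u]
      refine ⟨((t:ℂ) * u, t), ⟨?_, ht⟩, ?_⟩
      · exact mem_iff.2 (le_trans habs ht.2)
      · rw [hΦ1 _ t ht habs]
        have e1 : (t:ℂ) * u / (t:ℂ) = u := by field_simp
        rw [e1, hu2]
        have e2 : (t:ℂ) * (w / (t:ℂ)) = w := by field_simp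
        rw [e2]
  -- boundary behaviour
  have hTop : ∀ z ∈ Metric.closedBall (0:ℂ) 1, Φ (z, 1) = (φ z, 1) := by
    intro z hz
    rw [hΦ1 z 1 (by norm_num) (mem_iff.1 hz)]
    norm_num
  have hSide : ∀ z ∈ Metric.closedBall (0:ℂ) 1, ∀ t ∈ Set.Icc (0:ℝ) 1,
      t = 0 ∨ ‖z‖ = 1 → Φ (z, t) = (z, t) := by
    intro z hz t ht hc
    rcases hc with h | h
    · exact hΦ2 z hz t ht (by rw [h]; exact norm_nonneg z)
    · exact hΦ2 z hz t ht (by rw [h]; exact ht.2)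
  refine ⟨⟨hMapsTo, hInj, hSurj⟩, hTop, hSide, ?_⟩
  -- the bi-Lipschitz estimate
  intro p hp q hq
  have hz : Complex.abs p.1 ≤ 1 := mem_iff.1 hp.1
  have hw : Complex.abs q.1 ≤ 1 := mem_iff.1 hq.1
  rw [hgp p hp, hgp q hq]
  rw [Prod.dist_eq, Prod.dist_eq]
  simp only [Complex.dist_eq, Real.dist_eq]
  set A := Complex.abs (p.1 - q.1) with hA
  set B := |p.2 - q.2| with hB
  set G := Complex.abs (g φ p.2 p.1 - g φ q.2 q.1) with hG
  have hF1 : Complex.abs (g φ p.2 p.1 - g φ q.2 p.1) ≤ (L + 1) * B :=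
    time_var' hL hlip hbd hmaps hp.2 hq.2 hz
  have hF2 := slice hL hlip hbd hmaps hq.2 hz hw
  have htri1 : G ≤ Complex.abs (g φ p.2 p.1 - g φ q.2 p.1)
      + Complex.abs (g φ q.2 p.1 - g φ q.2 q.1) := AbsoluteValue.sub_le _ _ _ _
  have htri2 : Complex.abs (g φ q.2 p.1 - g φ q.2 q.1)
      ≤ Complex.abs (g φ q.2 p.1 - g φ p.2 p.1) + G := AbsoluteValue.sub_le _ _ _ _
  have hsym : Complex.abs (g φ q.2 p.1 - g φ p.2 p.1)
      = Complex.abs (g φ p.2 p.1 - g φ q.2 p.1) := AbsoluteValue.map_sub _ _ _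
  have hAM : A ≤ max A B := le_max_left _ _
  have hBM : B ≤ max A B := le_max_right _ _
  have hGM : G ≤ max G B := le_max_left _ _
  have hBM2 : B ≤ max G B := le_max_right _ _
  have hM1 : (0:ℝ) ≤ max A B := le_trans (abs_nonneg _) hBM
  have hM2 : (0:ℝ) ≤ max G B := le_trans (abs_nonneg _) hBM2
  constructor
  · -- lower bound
    rw [div_le_iff₀ hK0]
    refine max_le ?_ ?_
    · have hc1 : A ≤ (L^2 + L + 1) * Complex.abs (g φ q.2 p.1 - g φ q.2 q.1) := hF2.1
      have hc2 : Complex.abs (g φ q.2 p.1 - g φ q.2 q.1) ≤ (L + 2) * max G B := by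
        rw [hsym] at htri2
        nlinarith [htri2, hF1, hBM2, hGM, hM2]
      calc A ≤ (L^2 + L + 1) * ((L + 2) * max G B) := by
              refine le_trans hc1 ?_
              exact mul_le_mul_of_nonneg_left hc2 (by nlinarith)
        _ = max G B * ((L^2 + L + 1) * (L + 2)) := by ring
    · calc B ≤ max G B := hBM2
        _ ≤ max G B * ((L^2 + L + 1) * (L + 2)) := by nlinarith
  · -- upper bound
    refine max_le ?_ ?_
    · have hc1 : G ≤ (L + 1) * B + (L + 2) * A := by
        nlinarith [htri1, hF1, hF2.2]
      have hc2 : G ≤ (2 * L + 3) * max A B := by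
        nlinarith [hc1, hAM, hBM, hM1]
      refine le_trans hc2 (mul_le_mul_of_nonneg_right (by nlinarith) hM1)
    · calc B ≤ max A B := hBM
        _ ≤ (L^2 + L + 1) * (L + 2) * max A B := by nlinarith
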